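/- For every integer N ≥ 1, every integer n ≥ 0, and every real x ≠ 0, 2^{N+1} · N! · Σ_{(s,m,p): s+m+p=n} C(N+s, s) · C(m+N, m) · (-1)^m · T_p^{(N+1)}(x) = Σ_{i=1}^{N} Σ_{l=0}^{i} a(i,N) · (i!/l!) · Σ_{(m,s,p): m+s+p=n} C(2N+m-i-1, m) · C(i+s-l, s) · (p+l)_l · x^{i-2N-m} · T_{p+l}(x) + Σ_{i=1}^{N} Σ_{l=0}^{i} a(i,N) · (i!/l!) · (-1)^{i-l} · Σ_{(m,s,p): m+s+p=n} (-1)^s · C(2N+m-i-1, m) · C(i+s-l, s) · (p+l)_l · x^{i-2N-m} · T_{p+l}(x), where the sums over (m,s,p) (resp. (s,m,p)) run over all triples of nonnegative integers summing to n and x^{i-2N-m} is an integer (possibly negative) power of x. -/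

import Mathlib

/-- The falling factorial `(y)_k = y(y-1)⋯(y-k+1)` of a real number, `(y)_0 = 1`. -/
noncomputable def fallingFactorial (y : ℝ) (k : ℕ) : ℝ :=
  ∏ j ∈ Finset.range k, (y - (j : ℝ))

/-- `D = 1 - 2x·t + t²` as a formal power series in `t` over `ℝ`. -/
noncomputable def Dser (x : ℝ) : PowerSeries ℝ :=
  1 - PowerSeries.C (2 * x) * PowerSeries.X + PowerSeries.X ^ 2

/-- The higher-order Chebyshev polynomial of the first kind `T_n^{(α)}(x)`,
the `n`-th coefficient of `((1-t²)·D⁻¹)^α`. -/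
noncomputable def chebT (x : ℝ) (α n : ℕ) : ℝ :=
  PowerSeries.coeff n (((1 - PowerSeries.X ^ 2) * (Dser x)⁻¹) ^ α)

open PowerSeries Finset

/-- `Sg r k` is the power series `(1 - r*X)^{-(k+1)}`. -/
noncomputable def Sg (r : ℝ) (k : ℕ) : PowerSeries ℝ :=
  PowerSeries.mk fun m => ((k + m).choose m : ℝ) * r ^ m

lemma Sg_mul_succ (r : ℝ) (k : ℕ) :
    Sg r (k + 1) * (1 - C r * X) = Sg r k := by
  ext n
  rw [mul_sub, mul_one, map_sub,
    show Sg r (k+1) * (C r * X) = C r * (Sg r (k+1) * X) by ring, coeff_C_mul]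
  cases n with
  | zero => simp [Sg]
  | succ n =>
      rw [coeff_succ_mul_X]
      simp only [Sg, coeff_mk]
      rw [show k + 1 + (n + 1) = (k + 1 + n) + 1 by ring, Nat.choose_succ_succ (k+1+n) n,
        show k + 1 + n = k + (n+1) by ring]
      push_cast
      ring

lemma Sg_zero_mul (r : ℝ) : Sg r 0 * (1 - C r * X) = 1 := by
  ext n
  rw [mul_sub, mul_one, map_sub,
    show Sg r 0 * (C r * X) = C r * (Sg r 0 * X) by ring, coeff_C_mul]
  cases n with
  | zero => simp [Sg]
  | succ n =>
      rw [coeff_succ_mul_X]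
      simp only [Sg, coeff_mk, zero_add, Nat.choose_self, coeff_one]
      push_cast
      ring_nf

lemma derivative_Sg (r : ℝ) (k : ℕ) :
    d⁄dX ℝ (Sg r k) = C (r * (k + 1)) * Sg r (k + 1) := by
  ext n
  rw [coeff_derivative, coeff_C_mul]
  simp only [Sg, coeff_mk]
  rw [Nat.cast_choose ℝ (show n+1 ≤ k+(n+1) by omega),
    Nat.cast_choose ℝ (show n ≤ k+1+n by omega),
    show k + (n+1) - (n+1) = k by omega, show k + 1 + n - n = k + 1 by omega,
    show k + (n+1) = k + 1 + n by omega, Nat.factorial_succ (n), Nat.factorial_succ k]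
  have h1 : (n.factorial : ℝ) ≠ 0 := Nat.cast_ne_zero.mpr (Nat.factorial_ne_zero n)
  have h2 : (k.factorial : ℝ) ≠ 0 := Nat.cast_ne_zero.mpr (Nat.factorial_ne_zero k)
  field_simp
  push_cast
  ring

lemma Sg_mul_pow (r : ℝ) (k : ℕ) : Sg r k * (1 - C r * X) ^ (k + 1) = 1 := by
  induction k with
  | zero => rw [pow_one, Sg_zero_mul]
  | succ k ih =>
      have h2 : (1 - C r * X) ^ (k + 2) = (1 - C r * X) * (1 - C r * X) ^ (k + 1) := by
        ring
      rw [h2, show Sg r (k+1) * ((1 - C r * X) * (1 - C r * X) ^ (k + 1))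
        = (Sg r (k+1) * (1 - C r * X)) * (1 - C r * X) ^ (k + 1) by ring,
        Sg_mul_succ, ih]

lemma fallingFactorial_succ (y : ℝ) (l : ℕ) :
    fallingFactorial y (l + 1) = fallingFactorial y l * (y - l) :=
  Finset.prod_range_succ _ _

lemma coeff_iter_derivative (φ : PowerSeries ℝ) (l : ℕ) : ∀ p : ℕ,
    coeff p ((d⁄dX ℝ)^[l] φ)
      = fallingFactorial ((p + l : ℕ) : ℝ) l * coeff (p + l) φ := by
  induction l with
  | zero => intro p; simp [fallingFactorial]
  | succ l ih =>
      intro p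
      rw [Function.iterate_succ_apply', coeff_derivative, ih (p+1),
        show p + 1 + l = p + (l+1) by omega,
        show ((p + (l+1) : ℕ) : ℝ) = ((p + (l + 1) : ℕ) : ℝ) from rfl,
        fallingFactorial_succ]
      have : (((p + (l + 1) : ℕ) : ℝ) - (l : ℝ)) = ((p : ℝ) + 1) := by push_cast; ring
      rw [this]
      ring

lemma iter_derivative_C_mul (c : ℝ) (φ : PowerSeries ℝ) (i : ℕ) :
    (d⁄dX ℝ)^[i] (C c * φ) = C c * (d⁄dX ℝ)^[i] φ := by
  induction i with
  | zero => rfl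
  | succ i ih =>
      rw [Function.iterate_succ_apply', ih, Function.iterate_succ_apply',
        Derivation.leibniz, derivative_C]
      simp [smul_eq_mul]

lemma iter_derivative_add (φ ψ : PowerSeries ℝ) (i : ℕ) :
    (d⁄dX ℝ)^[i] (φ + ψ) = (d⁄dX ℝ)^[i] φ + (d⁄dX ℝ)^[i] ψ := by
  induction i with
  | zero => rfl
  | succ i ih => rw [Function.iterate_succ_apply', ih, Function.iterate_succ_apply',
      Function.iterate_succ_apply', map_add]

lemma derivative_Dser (x : ℝ) : d⁄dX ℝ (Dser x) = - (C 2 * (C x - X)) := by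
  have h2 : C (2*x) = C 2 * C x := by rw [← map_mul]
  rw [Dser, map_add, map_sub, h2]
  rw [Derivation.leibniz, Derivation.leibniz_pow]
  simp [smul_eq_mul]
  rw [show C 2 = (2 : ℝ⟦X⟧) from map_ofNat _ 2]
  ring

lemma Dser_inv_mul (x : ℝ) : Dser x * (Dser x)⁻¹ = 1 := by
  apply PowerSeries.mul_inv_cancel
  simp [Dser]

lemma derivative_g (x : ℝ) :
    d⁄dX ℝ (Dser x)⁻¹ = C 2 * ((C x - X) * ((Dser x)⁻¹) ^ 2) := by
  rw [derivative_inv', derivative_Dser]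
  ring

lemma coeff_triple (φ ψ χ : PowerSeries ℝ) (n : ℕ) :
    coeff n (φ * ψ * χ)
      = ∑ m ∈ range (n + 1), ∑ s ∈ range (n + 1 - m),
          coeff m φ * coeff s ψ * coeff (n - m - s) χ := by
  rw [mul_assoc, coeff_mul, Finset.Nat.sum_antidiagonal_eq_sum_range_succ_mk]
  refine Finset.sum_congr rfl fun m hm => ?_
  have hmn : m ≤ n := by simpa [Nat.lt_succ_iff] using hm
  rw [coeff_mul, Finset.Nat.sum_antidiagonal_eq_sum_range_succ_mk, Finset.mul_sum]
  refine Finset.sum_congr (by congr 1; omega) fun s hs => ?_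
  ring

lemma sum_step {A : Type*} [CommRing A] (n : ℕ) (α β γ : ℕ → A) (u : ℕ → A)
    (h0 : γ 0 = α 0) (htop : γ (n + 1) = β n)
    (hmid : ∀ l, l < n → γ (l + 1) = α (l + 1) + β l) :
    (∑ l ∈ range (n + 1), α l * u l) + (∑ l ∈ range (n + 1), β l * u (l + 1))
      = ∑ l ∈ range (n + 2), γ l * u l := by
  rw [Finset.sum_range_succ' (fun l => γ l * u l) (n + 1),
    Finset.sum_range_succ' (fun l => α l * u l) n,
    Finset.sum_range_succ (fun l => β l * u (l + 1)) n,
    Finset.sum_range_succ (fun l => γ (l + 1) * u (l + 1)) n]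
  have h : ∀ l ∈ range n, γ (l + 1) * u (l + 1) = α (l + 1) * u (l + 1) + β l * u (l + 1) := by
    intro l hl
    rw [hmid l (mem_range.mp hl), add_mul]
  rw [Finset.sum_congr rfl h, Finset.sum_add_distrib, h0, htop]
  ring

set_option maxHeartbeats 1000000 in
lemma iter_derivative_Sg_mul (r : ℝ) (φ : PowerSeries ℝ) (i : ℕ) :
    (d⁄dX ℝ)^[i] (Sg r 0 * φ)
      = ∑ l ∈ range (i + 1),
          C ((i.factorial : ℝ) / (l.factorial : ℝ) * r ^ (i - l)) *
            (Sg r (i - l) * (d⁄dX ℝ)^[l] φ) := by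
  induction i with
  | zero => simp
  | succ i ih =>
      rw [Function.iterate_succ_apply', ih, map_sum]
      have step : ∀ l ∈ range (i + 1),
          d⁄dX ℝ (C ((i.factorial : ℝ) / (l.factorial : ℝ) * r ^ (i - l)) *
            (Sg r (i - l) * (d⁄dX ℝ)^[l] φ))
          = (C ((i.factorial : ℝ) / (l.factorial : ℝ) * r ^ (i - l) * (r * ((i - l : ℕ) + 1))) *
              (Sg r (i + 1 - l) * (d⁄dX ℝ)^[l] φ))
            + (C ((i.factorial : ℝ) / (l.factorial : ℝ) * r ^ (i - l)) *
              (Sg r (i - l) * (d⁄dX ℝ)^[l + 1] φ)) := by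
        intro l hl
        have hli : l ≤ i := by simpa [Nat.lt_succ_iff] using hl
        rw [Derivation.leibniz, Derivation.leibniz, derivative_C, derivative_Sg,
          Function.iterate_succ_apply', show i + 1 - l = (i - l) + 1 by omega]
        simp only [smul_eq_mul, map_mul]
        ring
      trans (∑ l ∈ range (i + 1),
          ((C ((i.factorial : ℝ) / (l.factorial : ℝ) * r ^ (i - l) * (r * ((i - l : ℕ) + 1))) *
              (Sg r (i + 1 - l) * (d⁄dX ℝ)^[l] φ))
            + (C ((i.factorial : ℝ) / (l.factorial : ℝ) * r ^ (i - l)) *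
              (Sg r (i - l) * (d⁄dX ℝ)^[l + 1] φ))))
      · exact Finset.sum_congr rfl step
      rw [Finset.sum_add_distrib]
      have huu : ∀ l ∈ range (i + 1),
          C ((i.factorial : ℝ) / (l.factorial : ℝ) * r ^ (i - l)) *
              (Sg r (i - l) * (d⁄dX ℝ)^[l + 1] φ)
          = C ((i.factorial : ℝ) / (l.factorial : ℝ) * r ^ (i - l)) *
              (Sg r (i + 1 - (l + 1)) * (d⁄dX ℝ)^[l + 1] φ) := by
        intro l hl
        rw [show i + 1 - (l + 1) = i - l by omega]
      rw [Finset.sum_congr rfl huu]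
      refine sum_step i _ _ _ (fun l => Sg r (i + 1 - l) * (d⁄dX ℝ)^[l] φ) ?_ ?_ ?_
      · rw [Nat.sub_zero, Nat.sub_zero, Nat.factorial_succ]
        push_cast
        congr 1
        field_simp
        ring
      · rw [Nat.sub_self, Nat.sub_self]
        norm_num
        rw [div_self (Nat.cast_ne_zero.mpr (Nat.factorial_ne_zero _)),
          div_self (Nat.cast_ne_zero.mpr (Nat.factorial_ne_zero _))]
      · intro l hl
        obtain ⟨m, rfl⟩ : ∃ m, i = l + 1 + m := ⟨i - l - 1, by omega⟩
        rw [← map_add]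
        congr 1
        rw [show l + 1 + m - (l + 1) = m by omega, show l + 1 + m - l = m + 1 by omega,
          show l + 1 + m + 1 - (l + 1) = m + 1 by omega]
        have h1 : ((l+1).factorial : ℝ) ≠ 0 := Nat.cast_ne_zero.mpr (Nat.factorial_ne_zero _)
        have h2 : ((l).factorial : ℝ) ≠ 0 := Nat.cast_ne_zero.mpr (Nat.factorial_ne_zero _)
        rw [show l + 1 + m + 1 = (l + 1 + m) + 1 from rfl, Nat.factorial_succ ((l+1)+m),
          Nat.factorial_succ l]
        push_cast
        field_simp
        ring

lemma derivative_E (x : ℝ) : d⁄dX ℝ (C x - X) = -1 := by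
  rw [map_sub, derivative_C, derivative_X]; ring

lemma Kstep (x : ℝ) (M : ℕ) :
    (C x - X) * d⁄dX ℝ (C ((2:ℝ)^(M+1) * ((M+1).factorial:ℝ)) *
        ((C x - X)^(2*(M+1)) * ((Dser x)⁻¹)^(M+1+1)))
      + C (2 * ((M:ℝ)+1)) * (C ((2:ℝ)^(M+1) * ((M+1).factorial:ℝ)) *
        ((C x - X)^(2*(M+1)) * ((Dser x)⁻¹)^(M+1+1)))
      = C ((2:ℝ)^(M+2) * ((M+2).factorial:ℝ)) *
        ((C x - X)^(2*(M+2)) * ((Dser x)⁻¹)^(M+2+1)) := by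
  have hconst : ((2:ℝ)^(M+2) * ((M+2).factorial:ℝ))
      = (2 * ((M:ℝ)+2)) * ((2:ℝ)^(M+1) * ((M+1).factorial:ℝ)) := by
    rw [show M + 2 = (M+1) + 1 by omega, Nat.factorial_succ (M+1)]
    push_cast
    ring
  rw [hconst, show 2*(M+1) = (2*M+1)+1 by omega, show 2*(M+2) = (2*M+1)+3 by omega]
  simp only [Derivation.leibniz, Derivation.leibniz_pow, derivative_C, derivative_E,
    derivative_g, nsmul_eq_mul, smul_eq_mul, Nat.add_sub_cancel, map_mul, map_add, map_ofNat,
    map_one]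
  push_cast
  rw [← map_natCast C M]
  ring

set_option maxHeartbeats 1000000 in
lemma main_identity (a : ℕ → ℕ → ℝ)
    (ha11 : a 1 1 = 1)
    (ha1 : ∀ N : ℕ, 1 ≤ N → a 1 (N + 1) = (2 * (N : ℝ) - 1) * a 1 N)
    (hadiag : ∀ N : ℕ, 1 ≤ N → a (N + 1) (N + 1) = a N N)
    (harec : ∀ N i : ℕ, 2 ≤ i → i ≤ N →
      a i (N + 1) = a (i - 1) N + (2 * (N : ℝ) - (i : ℝ)) * a i N)
    (x : ℝ) : ∀ N : ℕ, 1 ≤ N →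
    ∑ j ∈ range N, C (a (j + 1) N) *
        ((C x - X) ^ (j + 1) * (d⁄dX ℝ)^[j + 1] (Dser x)⁻¹)
      = C ((2 : ℝ) ^ N * (N.factorial : ℝ)) *
          ((C x - X) ^ (2 * N) * ((Dser x)⁻¹) ^ (N + 1)) := by
  intro N hN
  induction N, hN using Nat.le_induction with
  | base =>
      rw [range_one, Finset.sum_singleton, ha11, Function.iterate_one, derivative_g]
      norm_num
      ring
  | succ N hN ih =>
      obtain ⟨M, rfl⟩ : ∃ M, N = M + 1 := ⟨N - 1, by omega⟩
      have h0 : C (a (0 + 1) (M + 2))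
          = C ((2 * ((M:ℝ) + 1) - ((0:ℕ) + 1)) * a (0 + 1) (M + 1)) := by
        congr 1
        norm_num
        rw [show M + 2 = M + 1 + 1 by omega, ha1 (M+1) (by omega)]
        push_cast
        ring
      have htop : C (a (M + 1 + 1) (M + 2)) = C (a (M + 1) (M + 1)) := by
        rw [show M + 2 = M + 1 + 1 by omega, hadiag (M+1) (by omega)]
      have hmid : ∀ l, l < M → C (a (l + 1 + 1) (M + 2))
          = C ((2 * ((M:ℝ) + 1) - (((l+1):ℕ) + 1)) * a (l + 1 + 1) (M + 1))
            + C (a (l + 1) (M + 1)) := by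
        intro l hl
        rw [← map_add]
        congr 1
        rw [show l + 1 + 1 = l + 2 by omega, show M + 2 = M + 1 + 1 by omega,
          harec (M+1) (l+2) (by omega) (by omega)]
        push_cast
        ring
      have hstep := sum_step M
        (fun j => C ((2 * ((M:ℝ) + 1) - ((j:ℕ) + 1)) * a (j + 1) (M + 1)))
        (fun j => C (a (j + 1) (M + 1)))
        (fun j => C (a (j + 1) (M + 2)))
        (fun j => (C x - X) ^ (j + 1) * (d⁄dX ℝ)^[j + 1] (Dser x)⁻¹)
        h0 htop hmid
      rw [show M + 1 + 1 = M + 2 by omega, ← hstep]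
      have hc : (C x - X) * d⁄dX ℝ (∑ j ∈ range (M+1), C (a (j + 1) (M+1)) *
              ((C x - X) ^ (j + 1) * (d⁄dX ℝ)^[j + 1] (Dser x)⁻¹))
            + C (2 * ((M:ℝ) + 1)) * (∑ j ∈ range (M+1), C (a (j + 1) (M+1)) *
              ((C x - X) ^ (j + 1) * (d⁄dX ℝ)^[j + 1] (Dser x)⁻¹))
          = (∑ l ∈ range (M + 1),
              C ((2 * ((M:ℝ) + 1) - ((l:ℕ) + 1)) * a (l + 1) (M + 1)) *
                ((C x - X) ^ (l + 1) * (d⁄dX ℝ)^[l + 1] (Dser x)⁻¹))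
            + ∑ l ∈ range (M + 1), C (a (l + 1) (M + 1)) *
                ((C x - X) ^ (l + 1 + 1) * (d⁄dX ℝ)^[l + 1 + 1] (Dser x)⁻¹) := by
        rw [map_sum, Finset.mul_sum, Finset.mul_sum, ← Finset.sum_add_distrib,
          ← Finset.sum_add_distrib]
        refine Finset.sum_congr rfl fun j hj => ?_
        simp only [Derivation.leibniz, Derivation.leibniz_pow, derivative_C, derivative_E,
          derivative_X, nsmul_eq_mul, smul_eq_mul, Nat.add_sub_cancel, map_mul, map_add,
          map_sub, map_ofNat, map_one, Function.iterate_succ_apply']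
        push_cast
        rw [← map_natCast C j]
        ring
      rw [← hc, ih, Kstep]

lemma P_inv (x : ℝ) (hx : x ≠ 0) (k : ℕ) :
    (C ((x⁻¹) ^ (k + 1)) * Sg x⁻¹ k) * (C x - X) ^ (k + 1) = 1 := by
  have hE : (C x - X) = C x * (1 - C x⁻¹ * X) := by
    rw [mul_sub, mul_one, ← mul_assoc, ← map_mul, mul_inv_cancel₀ hx, map_one, one_mul]
  rw [hE, mul_pow, ← map_pow]
  calc C (x⁻¹ ^ (k+1)) * Sg x⁻¹ k * (C (x ^ (k+1)) * (1 - C x⁻¹ * X) ^ (k+1))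
      = (C (x⁻¹ ^ (k+1)) * C (x ^ (k+1))) * (Sg x⁻¹ k * (1 - C x⁻¹ * X) ^ (k+1)) := by
        ring
    _ = 1 := by
        rw [Sg_mul_pow, ← map_mul, ← mul_pow, inv_mul_cancel₀ hx, one_pow, map_one, one_mul]

lemma assembled (a : ℕ → ℕ → ℝ)
    (ha11 : a 1 1 = 1)
    (ha1 : ∀ N : ℕ, 1 ≤ N → a 1 (N + 1) = (2 * (N : ℝ) - 1) * a 1 N)
    (hadiag : ∀ N : ℕ, 1 ≤ N → a (N + 1) (N + 1) = a N N)
    (harec : ∀ N i : ℕ, 2 ≤ i → i ≤ N →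
      a i (N + 1) = a (i - 1) N + (2 * (N : ℝ) - (i : ℝ)) * a i N)
    (x : ℝ) (hx : x ≠ 0) (N : ℕ) (hN : 1 ≤ N) :
    ∑ j ∈ range N, C (2 * a (j + 1) N) *
        ((C ((x⁻¹) ^ (2 * N - (j+1))) * Sg x⁻¹ (2 * N - (j+1) - 1)) *
          (d⁄dX ℝ)^[j + 1] (Dser x)⁻¹)
      = C ((2 : ℝ) ^ (N + 1) * (N.factorial : ℝ)) * ((Dser x)⁻¹) ^ (N + 1) := by
  have hEunit : IsUnit ((C x - X) ^ (2 * N)) := by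
    refine IsUnit.pow _ ?_
    rw [PowerSeries.isUnit_iff_constantCoeff]
    simpa using hx
  refine hEunit.mul_left_cancel ?_
  rw [Finset.mul_sum]
  have hterm : ∀ j ∈ range N,
      (C x - X) ^ (2 * N) * (C (2 * a (j + 1) N) *
        ((C ((x⁻¹) ^ (2 * N - (j+1))) * Sg x⁻¹ (2 * N - (j+1) - 1)) *
          (d⁄dX ℝ)^[j + 1] (Dser x)⁻¹))
      = C 2 * (C (a (j + 1) N) *
          ((C x - X) ^ (j + 1) * (d⁄dX ℝ)^[j + 1] (Dser x)⁻¹)) := by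
    intro j hj
    have hjN : j < N := mem_range.mp hj
    have hk : 2 * N - (j+1) - 1 + 1 = 2 * N - (j+1) := by omega
    have hsplit : (C x - X) ^ (2 * N)
        = (C x - X) ^ (2 * N - (j+1)) * (C x - X) ^ (j + 1) := by
      rw [← pow_add]
      congr 1
      omega
    have hP := P_inv x hx (2 * N - (j+1) - 1)
    rw [hk] at hP
    calc (C x - X) ^ (2 * N) * (C (2 * a (j + 1) N) *
        ((C ((x⁻¹) ^ (2 * N - (j+1))) * Sg x⁻¹ (2 * N - (j+1) - 1)) *
          (d⁄dX ℝ)^[j + 1] (Dser x)⁻¹))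
        = (C (2 * a (j+1) N)) *
            ((C ((x⁻¹) ^ (2 * N - (j+1))) * Sg x⁻¹ (2 * N - (j+1) - 1)) *
              (C x - X) ^ (2 * N - (j+1))) *
            ((C x - X) ^ (j + 1) * (d⁄dX ℝ)^[j + 1] (Dser x)⁻¹) := by
          rw [hsplit]
          ring
      _ = C 2 * (C (a (j + 1) N) *
            ((C x - X) ^ (j + 1) * (d⁄dX ℝ)^[j + 1] (Dser x)⁻¹)) := by
          have h2 : C (2 * a (j+1) N) = C 2 * C (a (j+1) N) := by rw [map_mul]
          rw [hP, h2]
          ring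
  rw [Finset.sum_congr rfl hterm, ← Finset.mul_sum,
    main_identity a ha11 ha1 hadiag harec x N hN]
  simp only [map_mul, map_pow, map_ofNat]
  ring

set_option maxHeartbeats 1000000 in
/-- for `N ≥ 1`, `n ≥ 0` and real `x ≠ 0`,
`2^{N+1} N! Σ_{s+m+p=n} C(N+s,s) C(m+N,m) (-1)^m T_p^{(N+1)}(x)
 = Σ_{i=1}^N Σ_{l=0}^i a(i,N) (i!/l!) Σ_{m+s+p=n} C(2N+m-i-1,m) C(i+s-l,s)
     (p+l)_l x^{i-2N-m} T_{p+l}(x)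
 + Σ_{i=1}^N Σ_{l=0}^i a(i,N) (i!/l!) (-1)^{i-l} Σ_{m+s+p=n} (-1)^s
     C(2N+m-i-1,m) C(i+s-l,s) (p+l)_l x^{i-2N-m} T_{p+l}(x)`,
where sums over triples of nonnegative integers summing to `n` are realized as
double sums with the third index determined, and `a` is the family defined by
the recursion `a(1,1) = 1`, `a(1,N+1) = (2N-1)a(1,N)`, `a(N+1,N+1) = a(N,N)`,
`a(i,N+1) = a(i-1,N) + (2N-i)a(i,N)` for `2 ≤ i ≤ N`. -/
theorem stmt10
    (a : ℕ → ℕ → ℝ)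
    (ha11 : a 1 1 = 1)
    (ha1 : ∀ N : ℕ, 1 ≤ N → a 1 (N + 1) = (2 * (N : ℝ) - 1) * a 1 N)
    (hadiag : ∀ N : ℕ, 1 ≤ N → a (N + 1) (N + 1) = a N N)
    (harec : ∀ N i : ℕ, 2 ≤ i → i ≤ N →
      a i (N + 1) = a (i - 1) N + (2 * (N : ℝ) - (i : ℝ)) * a i N)
    (x : ℝ) (hx : x ≠ 0) (N n : ℕ) (hN : 1 ≤ N) :
    2 ^ (N + 1) * (Nat.factorial N : ℝ) *
        ∑ s ∈ Finset.range (n + 1), ∑ m ∈ Finset.range (n + 1 - s),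
          (Nat.choose (N + s) s : ℝ) * (Nat.choose (m + N) m : ℝ) * (-1 : ℝ) ^ m *
            chebT x (N + 1) (n - s - m) =
      (∑ i ∈ Finset.Icc 1 N, ∑ l ∈ Finset.range (i + 1),
        a i N * ((Nat.factorial i : ℝ) / (Nat.factorial l : ℝ)) *
          ∑ m ∈ Finset.range (n + 1), ∑ s ∈ Finset.range (n + 1 - m),
            (Nat.choose (2 * N + m - i - 1) m : ℝ) * (Nat.choose (i + s - l) s : ℝ) *
              fallingFactorial (((n - m - s : ℕ) : ℝ) + (l : ℝ)) l *
              x ^ ((i : ℤ) - 2 * (N : ℤ) - (m : ℤ)) *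
              chebT x 1 ((n - m - s) + l)) +
      (∑ i ∈ Finset.Icc 1 N, ∑ l ∈ Finset.range (i + 1),
        a i N * ((Nat.factorial i : ℝ) / (Nat.factorial l : ℝ)) * (-1 : ℝ) ^ (i - l) *
          ∑ m ∈ Finset.range (n + 1), ∑ s ∈ Finset.range (n + 1 - m),
            (-1 : ℝ) ^ s *
              (Nat.choose (2 * N + m - i - 1) m : ℝ) * (Nat.choose (i + s - l) s : ℝ) *
              fallingFactorial (((n - m - s : ℕ) : ℝ) + (l : ℝ)) l *
              x ^ ((i : ℤ) - 2 * (N : ℤ) - (m : ℤ)) *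
              chebT x 1 ((n - m - s) + l)) := by
  -- abbreviations
  set g : PowerSeries ℝ := (Dser x)⁻¹ with hg
  set f : PowerSeries ℝ := (1 - X ^ 2) * g with hf
  -- LHS
  have hL : (∑ s ∈ Finset.range (n + 1), ∑ m ∈ Finset.range (n + 1 - s),
        ((N + s).choose s : ℝ) * ((m + N).choose m : ℝ) * (-1 : ℝ) ^ m *
          chebT x (N + 1) (n - s - m))
      = coeff n (Sg 1 N * Sg (-1) N * f ^ (N + 1)) := by
    rw [coeff_triple]
    refine Finset.sum_congr rfl fun s hs => Finset.sum_congr rfl fun m hm => ?_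
    simp only [Sg, coeff_mk, chebT, one_pow, mul_one, hf, hg]
    rw [Nat.add_comm m N]
    ring
  have h1N : Sg 1 N * (1 - X : ℝ⟦X⟧) ^ (N + 1) = 1 := by
    have := Sg_mul_pow 1 N
    rwa [map_one, one_mul] at this
  have h2N : Sg (-1) N * (1 + X : ℝ⟦X⟧) ^ (N + 1) = 1 := by
    have := Sg_mul_pow (-1) N
    rwa [map_neg, map_one, show (1 - -1 * X : ℝ⟦X⟧) = 1 + X by ring] at this
  have hABf : Sg 1 N * Sg (-1) N * f ^ (N + 1) = g ^ (N + 1) := by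
    calc Sg 1 N * Sg (-1) N * f ^ (N + 1)
        = (Sg 1 N * (1 - X) ^ (N+1)) * (Sg (-1) N * (1 + X) ^ (N+1)) * g ^ (N + 1) := by
          rw [hf, mul_pow, show ((1:ℝ⟦X⟧) - X ^ 2) = (1 - X) * (1 + X) by ring, mul_pow]
          ring
      _ = g ^ (N + 1) := by rw [h1N, h2N, one_mul, one_mul]
  -- blockwise RHS
  have hblock : ∀ i , 1 ≤ i → i ≤ N →
      ((∑ l ∈ Finset.range (i + 1),
        a i N * ((Nat.factorial i : ℝ) / (Nat.factorial l : ℝ)) *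
          ∑ m ∈ Finset.range (n + 1), ∑ s ∈ Finset.range (n + 1 - m),
            (Nat.choose (2 * N + m - i - 1) m : ℝ) * (Nat.choose (i + s - l) s : ℝ) *
              fallingFactorial (((n - m - s : ℕ) : ℝ) + (l : ℝ)) l *
              x ^ ((i : ℤ) - 2 * (N : ℤ) - (m : ℤ)) *
              chebT x 1 ((n - m - s) + l))
      + (∑ l ∈ Finset.range (i + 1),
        a i N * ((Nat.factorial i : ℝ) / (Nat.factorial l : ℝ)) * (-1 : ℝ) ^ (i - l) *
          ∑ m ∈ Finset.range (n + 1), ∑ s ∈ Finset.range (n + 1 - m),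
            (-1 : ℝ) ^ s *
              (Nat.choose (2 * N + m - i - 1) m : ℝ) * (Nat.choose (i + s - l) s : ℝ) *
              fallingFactorial (((n - m - s : ℕ) : ℝ) + (l : ℝ)) l *
              x ^ ((i : ℤ) - 2 * (N : ℤ) - (m : ℤ)) *
              chebT x 1 ((n - m - s) + l)))
      = coeff n (C (2 * a i N) *
          ((C ((x⁻¹) ^ (2 * N - i)) * Sg x⁻¹ (2 * N - i - 1)) * (d⁄dX ℝ)^[i] g)) := by
    intro i hi1 hiN
    -- the P series
    set P : PowerSeries ℝ := C ((x⁻¹) ^ (2 * N - i)) * Sg x⁻¹ (2 * N - i - 1) with hP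
    -- inner triple sums
    have hinner : ∀ (r : ℝ) (l : ℕ), l ≤ i →
        (∑ m ∈ Finset.range (n + 1), ∑ s ∈ Finset.range (n + 1 - m),
            (r ^ s) *
              ((Nat.choose (2 * N + m - i - 1) m : ℝ) * (Nat.choose (i + s - l) s : ℝ) *
              fallingFactorial (((n - m - s : ℕ) : ℝ) + (l : ℝ)) l *
              x ^ ((i : ℤ) - 2 * (N : ℤ) - (m : ℤ)) *
              chebT x 1 ((n - m - s) + l)))
        = coeff n (P * Sg r (i - l) * (d⁄dX ℝ)^[l] f) := by
      intro r l hl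
      rw [coeff_triple]
      refine Finset.sum_congr rfl fun m hm => Finset.sum_congr rfl fun s hs => ?_
      have hzpow : x ^ ((i : ℤ) - 2 * (N : ℤ) - (m : ℤ))
          = (x⁻¹) ^ (2 * N - i) * (x⁻¹) ^ m := by
        have he : (i : ℤ) - 2 * (N : ℤ) - (m : ℤ) = -((((2 * N - i) + m : ℕ)) : ℤ) := by omega
        rw [he, zpow_neg, zpow_natCast, ← inv_pow, pow_add]
      rw [hP, coeff_C_mul]
      simp only [Sg, coeff_mk, chebT, pow_one]
      rw [Nat.add_comm (2*N - i - 1) m, show m + (2*N - i - 1) = 2 * N + m - i - 1 by omega,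
        Nat.add_comm (i - l) s, show s + (i - l) = i + s - l by omega,
        coeff_iter_derivative, hzpow,
        show ((n - m - s + l : ℕ) : ℝ) = ((n - m - s : ℕ) : ℝ) + (l : ℝ) by push_cast; ring]
      ring
    -- sum over l for each sign
    have hsum : ∀ r : ℝ,
        (∑ l ∈ Finset.range (i + 1),
          a i N * ((Nat.factorial i : ℝ) / (Nat.factorial l : ℝ)) * (r ^ (i - l)) *
            coeff n (P * Sg r (i - l) * (d⁄dX ℝ)^[l] f))
        = coeff n (C (a i N) * (P * (d⁄dX ℝ)^[i] (Sg r 0 * f))) := by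
      intro r
      rw [iter_derivative_Sg_mul, Finset.mul_sum, Finset.mul_sum, map_sum]
      refine Finset.sum_congr rfl fun l hl => ?_
      have hx1 : C (a i N) * (P * (C ((i.factorial:ℝ)/(l.factorial:ℝ) * r^(i-l)) *
            (Sg r (i-l) * (d⁄dX ℝ)^[l] f)))
          = C (a i N * ((i.factorial:ℝ)/(l.factorial:ℝ) * r^(i-l))) *
            (P * Sg r (i-l) * (d⁄dX ℝ)^[l] f) := by
        simp only [map_mul]
        ring
      rw [hx1, coeff_C_mul]
      ring
    -- blocks
    have hb1 : (∑ l ∈ Finset.range (i + 1),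
        a i N * ((Nat.factorial i : ℝ) / (Nat.factorial l : ℝ)) *
          ∑ m ∈ Finset.range (n + 1), ∑ s ∈ Finset.range (n + 1 - m),
            (Nat.choose (2 * N + m - i - 1) m : ℝ) * (Nat.choose (i + s - l) s : ℝ) *
              fallingFactorial (((n - m - s : ℕ) : ℝ) + (l : ℝ)) l *
              x ^ ((i : ℤ) - 2 * (N : ℤ) - (m : ℤ)) *
              chebT x 1 ((n - m - s) + l))
        = coeff n (C (a i N) * (P * (d⁄dX ℝ)^[i] (Sg 1 0 * f))) := by
      rw [← hsum 1]
      refine Finset.sum_congr rfl fun l hl => ?_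
      have hl' : l ≤ i := by have := mem_range.mp hl; omega
      rw [← hinner 1 l hl']
      simp only [one_pow, mul_one, one_mul]
    have hb2 : (∑ l ∈ Finset.range (i + 1),
        a i N * ((Nat.factorial i : ℝ) / (Nat.factorial l : ℝ)) * (-1 : ℝ) ^ (i - l) *
          ∑ m ∈ Finset.range (n + 1), ∑ s ∈ Finset.range (n + 1 - m),
            (-1 : ℝ) ^ s *
              (Nat.choose (2 * N + m - i - 1) m : ℝ) * (Nat.choose (i + s - l) s : ℝ) *
              fallingFactorial (((n - m - s : ℕ) : ℝ) + (l : ℝ)) l *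
              x ^ ((i : ℤ) - 2 * (N : ℤ) - (m : ℤ)) *
              chebT x 1 ((n - m - s) + l))
        = coeff n (C (a i N) * (P * (d⁄dX ℝ)^[i] (Sg (-1) 0 * f))) := by
      rw [← hsum (-1)]
      refine Finset.sum_congr rfl fun l hl => ?_
      have hl' : l ≤ i := by have := mem_range.mp hl; omega
      rw [← hinner (-1) l hl']
      congr 1
      refine Finset.sum_congr rfl fun m hm => Finset.sum_congr rfl fun s hs => ?_
      ring
    rw [hb1, hb2, ← map_add]
    congr 1
    have e1 : Sg 1 0 * (1 - X ^ 2 : ℝ⟦X⟧) = 1 + X := by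
      have h1 : Sg 1 0 * (1 - X : ℝ⟦X⟧) = 1 := by
        have := Sg_zero_mul 1
        rwa [map_one, one_mul] at this
      calc Sg 1 0 * (1 - X ^ 2 : ℝ⟦X⟧) = Sg 1 0 * (1 - X) * (1 + X) := by ring
        _ = 1 + X := by rw [h1, one_mul]
    have e2 : Sg (-1) 0 * (1 - X ^ 2 : ℝ⟦X⟧) = 1 - X := by
      have h2 : Sg (-1) 0 * (1 + X : ℝ⟦X⟧) = 1 := by
        have := Sg_zero_mul (-1)
        rwa [map_neg, map_one, show (1 - -1 * X : ℝ⟦X⟧) = 1 + X by ring] at this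
      calc Sg (-1) 0 * (1 - X ^ 2 : ℝ⟦X⟧) = Sg (-1) 0 * (1 + X) * (1 - X) := by ring
        _ = 1 - X := by rw [h2, one_mul]
    have hfsum : Sg 1 0 * f + Sg (-1) 0 * f = C 2 * g := by
      calc Sg 1 0 * f + Sg (-1) 0 * f
          = (Sg 1 0 * (1 - X ^ 2)) * g + (Sg (-1) 0 * (1 - X ^ 2)) * g := by rw [hf]; ring
        _ = (1 + X) * g + (1 - X) * g := by rw [e1, e2]
        _ = C 2 * g := by rw [show C (2:ℝ) = (2:ℝ⟦X⟧) from map_ofNat _ 2]; ring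
    calc C (a i N) * (P * (d⁄dX ℝ)^[i] (Sg 1 0 * f))
          + C (a i N) * (P * (d⁄dX ℝ)^[i] (Sg (-1) 0 * f))
        = C (a i N) * (P * ((d⁄dX ℝ)^[i] (Sg 1 0 * f) + (d⁄dX ℝ)^[i] (Sg (-1) 0 * f))) := by
          ring
      _ = C (a i N) * (P * (C 2 * (d⁄dX ℝ)^[i] g)) := by
          rw [← iter_derivative_add, hfsum, iter_derivative_C_mul]
      _ = C (2 * a i N) * (P * (d⁄dX ℝ)^[i] g) := by
          simp only [map_mul]
          ring
  -- final assembly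
  rw [hL, hABf]
  have hIcc : ∀ (F : ℕ → ℝ), (∑ i ∈ Finset.Icc 1 N, F i) = ∑ j ∈ Finset.range N, F (j + 1) := by
    intro F
    rw [← Finset.Ico_add_one_right_eq_Icc, Finset.sum_Ico_eq_sum_range]
    refine Finset.sum_congr (by norm_num) fun j _ => by rw [Nat.add_comm 1 j]
  rw [hIcc, hIcc, ← Finset.sum_add_distrib]
  have hterm : ∀ j ∈ Finset.range N, _ = _ := fun j hj =>
    hblock (j + 1) (by omega) (by have := mem_range.mp hj; omega)
  rw [Finset.sum_congr rfl hterm, ← map_sum,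
    assembled a ha11 ha1 hadiag harec x hx N hN, coeff_C_mul]
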